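/- Let m, k, f be natural numbers with k ≥ 1, m ≥ 1, and set q := m(f+1). Let λ > 1 and for each r ∈ {1,…,k} let σ^{(r)} : ℕ → {1,…,m} × ℝ be a round strategy on m rays with all turning distances ≥ 1. Suppose that for every ray i and every x ≥ 1, at least f+1 of the k robots λ-cover the point at distance x on ray i. Then the k sequences of turning distances t^{(r)}_j := (σ^{(r)}_j).2 form a q-fold λ-cover of ℝ_{≥1} in the ORC setting; that is, for every x ≥ 1 the total number of pairs (r, j) with x ≤ t^{(r)}_j and ((λ−1)/2)·x ≥ t^{(r)}_1 + ⋯ + t^{(r)}_{j−1} is at least q. -/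

import Mathlib

/-- Reduction from the `m`-ray search problem with crash faults to the
one-ray-cover-with-returns setting: if every point at distance `x ≥ 1` on every
ray is `λ`-covered by at least `f+1` of the `k` robots (round strategies on `m`
rays), then the sequences of turning distances form a `q`-fold `λ`-cover of
`[1,∞)` in the ORC setting, where `q = m(f+1)`. -/
theorem m_ray_to_orc_reduction
    (m k f : ℕ) (hm : 1 ≤ m) (hk : 1 ≤ k)
    (lam : ℝ) (hlam : 1 < lam)
    (σ : Fin k → ℕ → Fin m × ℝ)
    (hσ : ∀ r j, 1 ≤ (σ r j).2)
    (hcov : ∀ (i : Fin m) (x : ℝ), 1 ≤ x →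
      f + 1 ≤ {r : Fin k | ∃ j : ℕ, (σ r j).1 = i ∧ x ≤ (σ r j).2 ∧
            (∑ l ∈ Finset.range j, (σ r l).2) ≤ ((lam - 1) / 2) * x}.ncard) :
    ∀ x : ℝ, 1 ≤ x →
      m * (f + 1) ≤ {p : Fin k × ℕ | x ≤ (σ p.1 p.2).2 ∧
            (∑ l ∈ Finset.range p.2, (σ p.1 l).2) ≤ ((lam - 1) / 2) * x}.ncard := by
  classical
  intro x hx
  set T : ℝ := ((lam - 1) / 2) * x with hT
  set N : ℕ := ⌈T⌉₊ + 1 with hN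
  set P : Fin k × ℕ → Prop := fun p => x ≤ (σ p.1 p.2).2 ∧
      (∑ l ∈ Finset.range p.2, (σ p.1 l).2) ≤ T with hP
  have hjle : ∀ p : Fin k × ℕ, P p → p.2 < N := by
    rintro ⟨r, j⟩ ⟨_, h2⟩
    have h1 : (j : ℝ) ≤ ∑ l ∈ Finset.range j, (σ r l).2 := by
      calc (j : ℝ) = ∑ _l ∈ Finset.range j, (1 : ℝ) := by simp
        _ ≤ _ := Finset.sum_le_sum (fun l _ => hσ r l)
    have h3 : (j : ℝ) ≤ (⌈T⌉₊ : ℝ) := le_trans (le_trans h1 h2) (Nat.le_ceil T)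
    have h4 : j ≤ ⌈T⌉₊ := by exact_mod_cast h3
    omega
  set B : Finset (Fin k × ℕ) :=
    (Finset.univ ×ˢ Finset.range N).filter P with hB
  have hset : {p : Fin k × ℕ | x ≤ (σ p.1 p.2).2 ∧
      (∑ l ∈ Finset.range p.2, (σ p.1 l).2) ≤ ((lam - 1) / 2) * x} = ↑B := by
    ext p
    simp only [hB, Finset.coe_filter, Finset.mem_product, Finset.mem_univ,
      Finset.mem_range, Set.mem_setOf_eq, true_and]
    constructor
    · intro h
      exact ⟨hjle p h, h⟩
    · intro h
      exact h.2
  rw [hset, Set.ncard_coe_finset]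
  -- fiberwise count
  have hcard : B.card = ∑ i : Fin m,
      (B.filter (fun p => (σ p.1 p.2).1 = i)).card := by
    exact Finset.card_eq_sum_card_fiberwise (fun p _ => Finset.mem_univ ((σ p.1 p.2).1))
  rw [hcard]
  have hfib : ∀ i : Fin m, f + 1 ≤ (B.filter (fun p => (σ p.1 p.2).1 = i)).card := by
    intro i
    set S : Set (Fin k) := {r : Fin k | ∃ j : ℕ, (σ r j).1 = i ∧ x ≤ (σ r j).2 ∧
        (∑ l ∈ Finset.range j, (σ r l).2) ≤ ((lam - 1) / 2) * x} with hS
    have hSfin : S.Finite := Set.toFinite S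
    have h1 : f + 1 ≤ S.ncard := hcov i x hx
    rw [Set.ncard_eq_toFinset_card' S] at h1
    refine le_trans h1 ?_
    set g : Fin k → ℕ := fun r =>
      if h : ∃ j : ℕ, (σ r j).1 = i ∧ x ≤ (σ r j).2 ∧
          (∑ l ∈ Finset.range j, (σ r l).2) ≤ ((lam - 1) / 2) * x then h.choose else 0
      with hg
    refine Finset.card_le_card_of_injOn (fun r => (r, g r)) ?_ ?_
    · intro r hr
      rw [Finset.mem_coe, Set.mem_toFinset] at hr
      have hre : ∃ j : ℕ, (σ r j).1 = i ∧ x ≤ (σ r j).2 ∧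
          (∑ l ∈ Finset.range j, (σ r l).2) ≤ ((lam - 1) / 2) * x := hr
      have hspec := hre.choose_spec
      have hgr : g r = hre.choose := by simp [hg, hre]
      have hPr : P (r, g r) := by
        rw [hgr]
        exact ⟨hspec.2.1, hspec.2.2⟩
      simp only [Finset.mem_coe, hB, Finset.mem_filter, Finset.mem_product, Finset.mem_univ,
        Finset.mem_range, true_and]
      refine ⟨⟨hjle (r, g r) hPr, hPr⟩, ?_⟩
      rw [hgr]
      exact hspec.1
    · intro a _ b _ hab
      exact (Prod.mk.injEq _ _ _ _).mp hab |>.1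
  calc (m : ℕ) * (f + 1) = ∑ _i : Fin m, (f + 1) := by simp [mul_comm]
    _ ≤ _ := Finset.sum_le_sum (fun i _ => hfib i)
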